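/- Let X be a Banach space and let Y, Z be closed subspaces of X with X = Y ⊕ Z (algebraic and topological direct sum) such that the sum is absolute, i.e. for all y, y' ∈ Y and z, z' ∈ Z with ‖y‖ = ‖y'‖ and ‖z‖ = ‖z'‖ one has ‖y + z‖ = ‖y' + z'‖. If Y and Z are nonzero, then n(X) ≤ min{n(Y), n(Z)}. -/

import Mathlib

open MeasureTheory NormedSpace Metric Filter
open scoped ENNReal NNReal Topology

/-- The numerical radius of a bounded linear operator `T` on a normed space `X`:
`v(T) = sup {‖x*(Tx)‖ : ‖x‖ = ‖x*‖ = x*(x) = 1}`. -/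
noncomputable def numRadius (𝕜 : Type*) [RCLike 𝕜] (X : Type*) [NormedAddCommGroup X]
    [NormedSpace 𝕜 X] (T : X →L[𝕜] X) : ℝ :=
  sSup {r : ℝ | ∃ (x : X) (f : StrongDual 𝕜 X),
    ‖x‖ = 1 ∧ ‖f‖ = 1 ∧ f x = 1 ∧ r = ‖f (T x)‖}

/-- The numerical index of a normed space `X`:
`n(X) = inf {v(T) : T ∈ L(X), ‖T‖ = 1}`. -/
noncomputable def numIndex (𝕜 : Type*) [RCLike 𝕜] (X : Type*) [NormedAddCommGroup X]
    [NormedSpace 𝕜 X] : ℝ :=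
  sInf {r : ℝ | ∃ T : X →L[𝕜] X, ‖T‖ = 1 ∧ r = numRadius 𝕜 X T}

section Aux
variable {𝕜 : Type*} [RCLike 𝕜] {E : Type*} [NormedAddCommGroup E] [NormedSpace 𝕜 E]

lemma numRadius_nonneg (T : E →L[𝕜] E) : 0 ≤ numRadius 𝕜 E T :=
  Real.sSup_nonneg (by rintro r ⟨x, f, _, _, _, rfl⟩; positivity)

lemma numRadius_bddAbove (T : E →L[𝕜] E) :
    BddAbove {r : ℝ | ∃ (x : E) (f : StrongDual 𝕜 E),
      ‖x‖ = 1 ∧ ‖f‖ = 1 ∧ f x = 1 ∧ r = ‖f (T x)‖} := by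
  refine ⟨‖T‖, ?_⟩
  rintro r ⟨x, f, hx, hf, _, rfl⟩
  calc ‖f (T x)‖ ≤ ‖f‖ * ‖T x‖ := f.le_opNorm _
    _ ≤ 1 * (‖T‖ * ‖x‖) := by rw [hf]; exact mul_le_mul_of_nonneg_left (T.le_opNorm x) zero_le_one
    _ = ‖T‖ := by rw [hx]; ring

lemma exists_phase (c : 𝕜) : ∃ l : 𝕜, ‖l‖ = 1 ∧ l * c = (‖c‖ : 𝕜) := by
  rcases eq_or_ne c 0 with h | h
  · exact ⟨1, norm_one, by simp [h]⟩
  · refine ⟨(‖c‖ : 𝕜) / c, ?_, ?_⟩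
    · rw [norm_div, RCLike.norm_ofReal, abs_of_nonneg (norm_nonneg c),
        div_self (norm_ne_zero_iff.mpr h)]
    · field_simp

end Aux

section Key
variable {𝕜 : Type*} [RCLike 𝕜]

set_option maxHeartbeats 1000000 in
theorem key (X : Type*) [NormedAddCommGroup X] [NormedSpace 𝕜 X]
    (Y Z : Submodule 𝕜 X) (hcompl : IsCompl Y Z)
    (habs : ∀ (y y' : Y) (z z' : Z), ‖y‖ = ‖y'‖ → ‖z‖ = ‖z'‖ →
      ‖(y : X) + (z : X)‖ = ‖(y' : X) + (z' : X)‖)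
    (hYne : Y ≠ ⊥) :
    numIndex 𝕜 X ≤ numIndex 𝕜 Y := by
  classical
  haveI : Nontrivial Y := Submodule.nontrivial_iff_ne_bot.mpr hYne
  haveI : Nontrivial X := by
    obtain ⟨y, hy⟩ := exists_ne (0 : Y)
    exact ⟨(y : X), 0, by simpa [Submodule.coe_eq_zero] using hy⟩
  set Pl : X →ₗ[𝕜] Y := Y.linearProjOfIsCompl Z hcompl with hPl
  set Ql : X →ₗ[𝕜] Z := Z.linearProjOfIsCompl Y hcompl.symm with hQl
  have hdecomp : ∀ x : X, ((Pl x : X) + (Ql x : X)) = x := fun x =>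
    Submodule.projection_add_projection_eq_self hcompl x
  -- monotonicity: ‖y‖ ≤ ‖y + z‖
  have hmono : ∀ (y : Y) (z : Z), ‖(y : X)‖ ≤ ‖(y : X) + (z : X)‖ := by
    intro y z
    have h2 : ‖(y : X) + (z : X)‖ = ‖(y : X) + ((-z : Z) : X)‖ :=
      habs y y z (-z) rfl (norm_neg z).symm
    have h3 : ‖((y : X) + (z : X)) + ((y : X) + ((-z : Z) : X))‖ ≤
        ‖(y : X) + (z : X)‖ + ‖(y : X) + ((-z : Z) : X)‖ := norm_add_le _ _
    have h4 : ((y : X) + (z : X)) + ((y : X) + ((-z : Z) : X)) = (y : X) + (y : X) := by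
      push_cast
      abel
    have h5 : ‖(y : X) + (y : X)‖ = 2 * ‖(y : X)‖ := by
      rw [← two_smul 𝕜, norm_smul, RCLike.norm_two]
    rw [h4, h5] at h3
    linarith [h2 ▸ h3]
  have hP : ∀ x : X, ‖Pl x‖ ≤ ‖x‖ := by
    intro x
    have := hmono (Pl x) (Ql x)
    rw [hdecomp x] at this
    simpa [Submodule.coe_norm] using this
  set P : X →L[𝕜] Y := LinearMap.mkContinuous Pl 1 (fun x => by simpa using hP x) with hPdef
  refine le_csInf ⟨numRadius 𝕜 Y (ContinuousLinearMap.id 𝕜 Y),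
    ContinuousLinearMap.id 𝕜 Y, ContinuousLinearMap.norm_id, rfl⟩ ?_
  rintro r ⟨S, hS, rfl⟩
  set T : X →L[𝕜] X := Y.subtypeL.comp (S.comp P) with hTdef
  have hTapp : ∀ x : X, T x = (S (Pl x) : X) := fun x => rfl
  have hT1 : ‖T‖ = 1 := by
    refine le_antisymm (T.opNorm_le_bound zero_le_one ?_) ?_
    · intro x
      rw [hTapp x, one_mul]
      calc ‖(S (Pl x) : X)‖ = ‖S (Pl x)‖ := (Submodule.coe_norm _).symm
        _ ≤ ‖S‖ * ‖Pl x‖ := S.le_opNorm _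
        _ ≤ 1 * ‖x‖ := by
            rw [hS]
            exact mul_le_mul_of_nonneg_left (hP x) zero_le_one
        _ = ‖x‖ := one_mul _
    · rw [← hS]
      refine S.opNorm_le_bound (norm_nonneg T) ?_
      intro u
      have h1 : Pl (u : X) = u := Submodule.linearProjOfIsCompl_apply_left hcompl u
      calc ‖S u‖ = ‖T (u : X)‖ := by
            rw [hTapp, h1, Submodule.coe_norm]
        _ ≤ ‖T‖ * ‖(u : X)‖ := T.le_opNorm _
        _ = ‖T‖ * ‖u‖ := by rw [← Submodule.coe_norm]
  have hstep : numIndex 𝕜 X ≤ numRadius 𝕜 X T := by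
    apply csInf_le
    · refine ⟨0, ?_⟩
      rintro r ⟨T', _, rfl⟩
      exact numRadius_nonneg T'
    · exact ⟨T, hT1, rfl⟩
  refine hstep.trans ?_
  -- main estimate : numRadius T ≤ numRadius S
  refine Real.sSup_le ?_ (numRadius_nonneg S)
  rintro r ⟨x, f, hx1, hf1, hfx, rfl⟩
  set y : Y := Pl x with hy
  set z : Z := Ql x with hz
  have hxyz : (y : X) + (z : X) = x := hdecomp x
  have hTx : T x = (S y : X) := hTapp x
  by_cases hy0 : y = 0
  · rw [hTx, hy0]
    simpa using numRadius_nonneg S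
  -- phase estimate
  set s : ℝ := RCLike.re (f (y : X)) with hs
  have hsum : RCLike.re (f (y : X)) + RCLike.re (f (z : X)) = 1 := by
    have h0 : f (y : X) + f (z : X) = 1 := by rw [← map_add, hxyz, hfx]
    have := congrArg RCLike.re h0
    simpa using this
  have hb : ∀ w : Y, ‖w‖ = ‖y‖ → ‖f (w : X)‖ ≤ s := by
    intro w hw
    obtain ⟨l, hl, hlc⟩ := exists_phase (f (w : X))
    have hnorm : ‖((l • w : Y) : X) + (z : X)‖ = 1 := by
      have := habs (l • w) y z z (by rw [norm_smul, hl, one_mul, hw]) rfl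
      rw [this, hxyz, hx1]
    have hval : f (((l • w : Y) : X) + (z : X)) = (‖f (w : X)‖ : 𝕜) + f (z : X) := by
      rw [map_add]
      congr 1
      rw [Submodule.coe_smul, _root_.map_smul, smul_eq_mul, hlc]
    have h5 : ‖f (((l • w : Y) : X) + (z : X))‖ ≤ 1 := by
      calc ‖f (((l • w : Y) : X) + (z : X))‖ ≤ ‖f‖ * ‖((l • w : Y) : X) + (z : X)‖ :=
            f.le_opNorm _
        _ = 1 := by rw [hf1, hnorm, one_mul]
    have h6 : ‖f (w : X)‖ + RCLike.re (f (z : X)) ≤ 1 := by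
      have := (RCLike.re_le_norm (K := 𝕜) _).trans (hval ▸ h5)
      simpa using this
    linarith [hsum]
  have ha : (0 : ℝ) < ‖y‖ := by
    rw [norm_pos_iff]
    exact hy0
  set a : ℝ := ‖y‖ with haa
  have hs0 : 0 ≤ s := le_trans (norm_nonneg _) (hb y rfl)
  have hfy : f (y : X) = (s : 𝕜) := by
    have h7 : ‖f (y : X)‖ ≤ RCLike.re (f (y : X)) := hb y rfl
    exact (RCLike.re_eq_self_of_le h7).symm
  have hfY : ∀ u : Y, ‖f (u : X)‖ * a ≤ s * ‖u‖ := by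
    intro u
    rcases eq_or_ne u 0 with h | h
    · simp [h]
    · have hu : (0 : ℝ) < ‖u‖ := by rwa [norm_pos_iff]
      set w : Y := ((a / ‖u‖ : ℝ) : 𝕜) • u with hwdef
      have hw : ‖w‖ = ‖y‖ := by
        rw [hwdef, norm_smul, RCLike.norm_ofReal, abs_of_pos (by positivity),
          div_mul_cancel₀ _ (ne_of_gt hu)]
      have h8 := hb w hw
      have h9 : ‖f (w : X)‖ = (a / ‖u‖) * ‖f (u : X)‖ := by
        rw [hwdef, Submodule.coe_smul, _root_.map_smul, smul_eq_mul, norm_mul,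
          RCLike.norm_ofReal, abs_of_pos (by positivity)]
      rw [h9, div_mul_eq_mul_div, div_le_iff₀ hu] at h8
      linarith [h8]
  have ha1 : a ≤ 1 := by
    have := hP x
    rw [hx1] at this
    rw [haa, Submodule.coe_norm]
    exact this
  have hsa : s ≤ a := by
    have h11 := f.le_opNorm (y : X)
    rw [hfy, hf1, one_mul, RCLike.norm_ofReal, abs_of_nonneg hs0, ← Submodule.coe_norm] at h11
    exact h11
  rcases eq_or_lt_of_le hs0 with hseq | hspos
  · -- s = 0 : f vanishes on Y
    have h12 : ‖f ((S y : Y) : X)‖ * a ≤ 0 := by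
      have := hfY (S y)
      rw [← hseq, zero_mul] at this
      exact this
    have h10 : ‖f ((S y : Y) : X)‖ = 0 :=
      le_antisymm (le_of_mul_le_mul_right (by rw [zero_mul]; exact h12) ha) (norm_nonneg _)
    rw [hTx, h10]
    exact numRadius_nonneg S
  · -- s > 0
    set yhat : Y := ((a⁻¹ : ℝ) : 𝕜) • y with hyhat
    have hyhat1 : ‖yhat‖ = 1 := by
      rw [hyhat, norm_smul, RCLike.norm_ofReal, abs_of_pos (by positivity), ← haa]
      field_simp
    set g : Y →L[𝕜] 𝕜 := ((a / s : ℝ) : 𝕜) • (f.comp Y.subtypeL) with hgdef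
    have hgapp : ∀ u : Y, g u = ((a / s : ℝ) : 𝕜) * f (u : X) := fun u => rfl
    have hgle : ‖g‖ ≤ 1 := by
      refine ContinuousLinearMap.opNorm_le_bound _ zero_le_one ?_
      intro u
      rw [hgapp, norm_mul, RCLike.norm_ofReal, abs_of_pos (by positivity), one_mul]
      have h13 := hfY u
      rw [div_mul_eq_mul_div, div_le_iff₀ hspos]
      linarith [h13]
    have ha' : a ≠ 0 := ne_of_gt ha
    have hs' : s ≠ 0 := ne_of_gt hspos
    have hgy : g yhat = 1 := by
      rw [hgapp, hyhat, Submodule.coe_smul, _root_.map_smul, smul_eq_mul, hfy]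
      norm_cast
      field_simp
    have hg1 : ‖g‖ = 1 := by
      refine le_antisymm hgle ?_
      have h14 := g.le_opNorm yhat
      rw [hgy, hyhat1, mul_one, norm_one] at h14
      exact h14
    have hmem : ‖g (S yhat)‖ ≤ numRadius 𝕜 Y S :=
      le_csSup (numRadius_bddAbove S) ⟨yhat, g, hyhat1, hg1, hgy, rfl⟩
    have hSy : f ((S y : Y) : X) = (s : 𝕜) * g (S yhat) := by
      have hyy : y = ((a : ℝ) : 𝕜) • yhat := by
        rw [hyhat, smul_smul]
        norm_cast
        rw [mul_inv_cancel₀ (ne_of_gt ha)]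
        simp
      rw [hgapp]
      calc f ((S y : Y) : X) = f ((S (((a : ℝ) : 𝕜) • yhat) : Y) : X) := by rw [← hyy]
        _ = ((a : ℝ) : 𝕜) * f ((S yhat : Y) : X) := by
            rw [_root_.map_smul, Submodule.coe_smul, _root_.map_smul, smul_eq_mul]
        _ = (s : 𝕜) * (((a / s : ℝ) : 𝕜) * f ((S yhat : Y) : X)) := by
            rw [← mul_assoc]
            congr 1
            norm_cast
            field_simp
    rw [hTx, hSy, norm_mul, RCLike.norm_ofReal, abs_of_nonneg hs0]
    calc s * ‖g (S yhat)‖ ≤ 1 * ‖g (S yhat)‖ :=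
          mul_le_mul_of_nonneg_right (hsa.trans ha1) (norm_nonneg _)
      _ = ‖g (S yhat)‖ := one_mul _
      _ ≤ numRadius 𝕜 Y S := hmem

end Key

/-- If a Banach space `X` is the absolute (algebraic and topological) direct sum of two
nonzero closed subspaces `Y` and `Z`, then `n(X) ≤ min {n(Y), n(Z)}`. -/
theorem numIndex_le_of_absolute_sum (𝕜 : Type*) [RCLike 𝕜] (X : Type*)
    [NormedAddCommGroup X] [NormedSpace 𝕜 X] [CompleteSpace X]
    (Y Z : Submodule 𝕜 X) (hY : IsClosed (Y : Set X)) (hZ : IsClosed (Z : Set X))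
    (hcompl : IsCompl Y Z)
    (habs : ∀ (y y' : Y) (z z' : Z), ‖y‖ = ‖y'‖ → ‖z‖ = ‖z'‖ →
      ‖(y : X) + (z : X)‖ = ‖(y' : X) + (z' : X)‖)
    (hYne : Y ≠ ⊥) (hZne : Z ≠ ⊥) :
    numIndex 𝕜 X ≤ min (numIndex 𝕜 Y) (numIndex 𝕜 Z) := by

  refine le_min (key X Y Z hcompl habs hYne) ?_
  refine key X Z Y hcompl.symm ?_ hZne
  intro z z' y y' h1 h2
  rw [add_comm ((z : X)), add_comm ((z' : X))]
  exact habs y y' z z' h2 h1
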